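/- Let G be a finite group and p a prime. Suppose A and B are subgroups of G such that G = ⟨A, B⟩, the intersection A ∩ B contains an element of order p, and the commuting graph on the set of order-p elements of A and the commuting graph on the set of order-p elements of B are both connected. Then the commuting graph Γ_p on the set of elements of G of order p is connected. -/

import Mathlib

open SimpleGraph Pointwise

/-- The commuting graph on a subset `X` of a group `G`: vertices are the elements of `X`,
and two distinct vertices are adjacent iff they commute. -/
def commGraph {G : Type*} [Group G] (X : Set G) : SimpleGraph X where
  Adj a b := a ≠ b ∧ (a : G) * (b : G) = (b : G) * (a : G)
  symm := ⟨fun a b h => ⟨h.1.symm, h.2.symm⟩⟩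
  loopless := ⟨fun a h => h.1 rfl⟩

/-- The connected component of `x` in the commuting graph on `X`, viewed as a subset of `G`. -/
def compSet {G : Type*} [Group G] (X : Set G) (x : G) (hx : x ∈ X) : Set G :=
  {y : G | ∃ hy : y ∈ X, (commGraph X).Reachable ⟨x, hx⟩ ⟨y, hy⟩}

/-- The stabilizer `H_x` in `G` of the connected component of `x` in the commuting graph on `X`,
under the conjugation action. -/
def conjStab {G : Type*} [Group G] (X : Set G) (x : G) (hx : x ∈ X) : Set G :=
  {g : G | (fun y => g⁻¹ * y * g) '' compSet X x hx = compSet X x hx}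

section Aux

variable {G : Type*} [Group G]

private def commGraph_incl_hom {X Y : Set G} (h : X ⊆ Y) :
    commGraph X →g commGraph Y where
  toFun z := ⟨z.1, h z.2⟩
  map_rel' := by
    intro u v hab
    refine ⟨fun e => hab.1 ?_, hab.2⟩
    have e' := congrArg Subtype.val e
    exact Subtype.ext e'

private lemma commGraph_reach_mono {X Y : Set G} (h : X ⊆ Y) {a b : X}
    (r : (commGraph X).Reachable a b) :
    (commGraph Y).Reachable ⟨a.1, h a.2⟩ ⟨b.1, h b.2⟩ :=
  r.map (commGraph_incl_hom h)

private lemma orderOf_conj' (g z : G) : orderOf (g⁻¹ * z * g) = orderOf z := by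
  have h1 : g⁻¹ * z * g = (MulAut.conj g⁻¹) z := by
    simp [MulAut.conj_apply]
  rw [h1, MulEquiv.orderOf_eq]

private lemma mem_Xp_conj {p : ℕ} (g : G) {z : G} (hz : z ∈ {x : G | orderOf x = p}) :
    g⁻¹ * z * g ∈ {x : G | orderOf x = p} := by
  simpa [Set.mem_setOf_eq, orderOf_conj'] using hz

private def commGraph_conj_hom (p : ℕ) (g : G) :
    commGraph {x : G | orderOf x = p} →g commGraph {x : G | orderOf x = p} where
  toFun z := ⟨g⁻¹ * z * g, mem_Xp_conj g z.2⟩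
  map_rel' := by
    rintro u v ⟨hne, hcomm⟩
    constructor
    · intro e
      apply hne
      have e' : g⁻¹ * (u : G) * g = g⁻¹ * (v : G) * g := Subtype.ext_iff.mp e
      refine Subtype.ext ?_
      have := congrArg (fun w => g * w * g⁻¹) e'
      simpa [mul_assoc] using this
    · show (g⁻¹ * u * g) * (g⁻¹ * v * g) = (g⁻¹ * v * g) * (g⁻¹ * u * g)
      have h1 : (g⁻¹ * (u:G) * g) * (g⁻¹ * v * g) = g⁻¹ * ((u:G) * v) * g := by group
      have h2 : (g⁻¹ * (v:G) * g) * (g⁻¹ * u * g) = g⁻¹ * ((v:G) * u) * g := by group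
      rw [h1, h2, hcomm]

private lemma commGraph_reach_conj {p : ℕ} (g : G) {a b : {x : G | orderOf x = p}}
    (r : (commGraph {x : G | orderOf x = p}).Reachable a b) :
    (commGraph {x : G | orderOf x = p}).Reachable
      ⟨g⁻¹ * a * g, mem_Xp_conj g a.2⟩ ⟨g⁻¹ * b * g, mem_Xp_conj g b.2⟩ :=
  r.map (commGraph_conj_hom p g)

end Aux

theorem commGraph_connected_of_amalgam
    {G : Type*} [Group G] [Finite G] (p : ℕ) (hp : p.Prime)
    (A B : Subgroup G) (hgen : A ⊔ B = ⊤)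
    (hmeet : ∃ x : G, x ∈ A ⊓ B ∧ orderOf x = p)
    (hA : (commGraph {x : G | x ∈ A ∧ orderOf x = p}).Connected)
    (hB : (commGraph {x : G | x ∈ B ∧ orderOf x = p}).Connected) :
    (commGraph {x : G | orderOf x = p}).Connected := by
  haveI : Fact p.Prime := ⟨hp⟩
  obtain ⟨x, hxAB, hxp⟩ := hmeet
  obtain ⟨hxA, hxB⟩ := Subgroup.mem_inf.mp hxAB
  set Γ := commGraph {x : G | orderOf x = p} with hΓ
  have hxX : x ∈ {x : G | orderOf x = p} := hxp
  -- the set of g with x reachable to g⁻¹ x g forms a subgroup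
  let S : Subgroup G :=
    { carrier := {g : G | Γ.Reachable ⟨x, hxX⟩ ⟨g⁻¹ * x * g, mem_Xp_conj g hxX⟩}
      one_mem' := by
        have : (⟨(1:G)⁻¹ * x * 1, mem_Xp_conj 1 hxX⟩ : {x : G | orderOf x = p})
            = ⟨x, hxX⟩ := by ext; simp
        rw [Set.mem_setOf_eq, this]
      mul_mem' := by
        intro g h hg hh
        have key := commGraph_reach_conj (p := p) h hg
        have e : (⟨(g * h)⁻¹ * x * (g * h), mem_Xp_conj (g * h) hxX⟩ :
            {x : G | orderOf x = p})
            = ⟨h⁻¹ * (g⁻¹ * x * g) * h, mem_Xp_conj h (mem_Xp_conj g hxX)⟩ :=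
          Subtype.ext (by group)
        show Γ.Reachable _ _
        rw [e]
        exact Reachable.trans hh key
      inv_mem' := by
        intro g hg
        have key := commGraph_reach_conj (p := p) g⁻¹ hg
        have e1 : (⟨g⁻¹⁻¹ * (g⁻¹ * x * g) * g⁻¹, mem_Xp_conj g⁻¹ (mem_Xp_conj g hxX)⟩ :
            {x : G | orderOf x = p}) = ⟨x, hxX⟩ := Subtype.ext (by group)
        rw [e1] at key
        exact key.symm }
  -- A and B are contained in S
  have hsub : ∀ (C : Subgroup G), x ∈ C →
      (commGraph {z : G | z ∈ C ∧ orderOf z = p}).Connected → C ≤ S := by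
    intro C hxC hC g hg
    have hmemC : g⁻¹ * x * g ∈ C := mul_mem (mul_mem (inv_mem hg) hxC) hg
    have h1 := hC.preconnected ⟨x, ⟨hxC, hxp⟩⟩ ⟨g⁻¹ * x * g, ⟨hmemC, (mem_Xp_conj g hxX : _)⟩⟩
    exact commGraph_reach_mono (fun z hz => hz.2) h1
  have hStop : ∀ g : G, g ∈ S := by
    intro g
    have : A ⊔ B ≤ S := sup_le (hsub A hxA hA) (hsub B hxB hB)
    rw [hgen] at this
    exact this (Subgroup.mem_top g)
  have key : ∀ g : G, Γ.Reachable ⟨x, hxX⟩ ⟨g⁻¹ * x * g, mem_Xp_conj g hxX⟩ := hStop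
  -- Sylow setup
  have hx1 : x ≠ 1 := by
    intro e
    rw [e, orderOf_one] at hxp
    exact hp.one_lt.ne' hxp.symm
  have hcyc : IsPGroup p (Subgroup.zpowers x) :=
    IsPGroup.of_card (by rw [Nat.card_zpowers, hxp, pow_one])
  obtain ⟨P, hPle⟩ := hcyc.exists_le_sylow
  have hxP : x ∈ (P : Subgroup G) := hPle (Subgroup.mem_zpowers x)
  haveI : Nontrivial (P : Subgroup G) :=
    ⟨⟨⟨x, hxP⟩, 1, fun e => hx1 (congrArg Subtype.val e)⟩⟩
  -- an element of order p in the center of P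
  have hZp : IsPGroup p (Subgroup.center (P : Subgroup G)) :=
    P.2.to_subgroup (Subgroup.center (P : Subgroup G))
  haveI hZnt : Nontrivial (Subgroup.center (P : Subgroup G)) :=
    IsPGroup.center_nontrivial P.2
  have hdvd : p ∣ Nat.card (Subgroup.center (P : Subgroup G)) := by
    obtain ⟨k, hk⟩ := IsPGroup.iff_card.mp hZp
    have h1 : 1 < Nat.card (Subgroup.center (P : Subgroup G)) := Finite.one_lt_card
    rcases Nat.eq_zero_or_pos k with hk0 | hk0
    · rw [hk0, pow_zero] at hk
      rw [hk] at h1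
      exact absurd h1 (by norm_num)
    · rw [hk]; exact dvd_pow_self p hk0.ne'
  obtain ⟨z, hzord⟩ := exists_prime_orderOf_dvd_card' p hdvd
  set z0 : G := ((z : (P : Subgroup G)) : G) with hz0
  have hz0ord : orderOf z0 = p := by
    rw [hz0, Subgroup.orderOf_coe, Subgroup.orderOf_coe, hzord]
  have hz0P : z0 ∈ (P : Subgroup G) := (z : (P : Subgroup G)).2
  have hz0comm : ∀ w : G, w ∈ (P : Subgroup G) → w * z0 = z0 * w := by
    intro w hw
    have := z.2
    rw [Subgroup.mem_center_iff] at this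
    exact congrArg Subtype.val (this ⟨w, hw⟩)
  have hz0X : z0 ∈ {x : G | orderOf x = p} := hz0ord
  have hxz0 : Γ.Reachable ⟨x, hxX⟩ ⟨z0, hz0X⟩ := by
    by_cases hxe : x = z0
    · have e : (⟨x, hxX⟩ : {x : G | orderOf x = p}) = ⟨z0, hz0X⟩ := Subtype.ext hxe
      rw [e]
    · refine SimpleGraph.Adj.reachable ?_
      refine ⟨fun e => hxe (congrArg Subtype.val e), ?_⟩
      show x * z0 = z0 * x
      exact hz0comm x hxP
  -- main reachability
  have main : ∀ (y : G) (hy : y ∈ {x : G | orderOf x = p}),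
      Γ.Reachable ⟨x, hxX⟩ ⟨y, hy⟩ := by
    intro y hy
    have hycyc : IsPGroup p (Subgroup.zpowers y) :=
      IsPGroup.of_card (by rw [Nat.card_zpowers, hy, pow_one])
    obtain ⟨Q, hQle⟩ := hycyc.exists_le_sylow
    have hyQ : y ∈ (Q : Subgroup G) := hQle (Subgroup.mem_zpowers y)
    obtain ⟨g, hg⟩ := MulAction.exists_smul_eq G P Q
    -- y ∈ Q = g • P
    have hQsub : (Q : Subgroup G) = MulAut.conj g • (P : Subgroup G) := by
      rw [← hg]; rfl
    have hy' : y ∈ MulAut.conj g • (P : Subgroup G) := hQsub ▸ hyQ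
    have hwP : g⁻¹ * y * g ∈ (P : Subgroup G) := by
      have := (Subgroup.mem_pointwise_smul_iff_inv_smul_mem).mp hy'
      simpa [MulAut.conj_apply] using this
    set w : G := g⁻¹ * y * g with hw
    have hwy' : g * w * g⁻¹ = y := by rw [hw]; group
    -- z1 := g * z0 * g⁻¹ is reachable from x and commutes with y
    set z1 : G := g⁻¹⁻¹ * z0 * g⁻¹ with hz1
    have hz1X : z1 ∈ {x : G | orderOf x = p} := mem_Xp_conj g⁻¹ hz0X
    have hr1 : Γ.Reachable ⟨x, hxX⟩ ⟨g⁻¹⁻¹ * x * g⁻¹, mem_Xp_conj g⁻¹ hxX⟩ := key g⁻¹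
    have hr2 := commGraph_reach_conj (p := p) g⁻¹ hxz0
    have hr3 : Γ.Reachable ⟨x, hxX⟩ ⟨z1, hz1X⟩ := hr1.trans hr2
    have hz1comm : y * z1 = z1 * y := by
      rw [hz1, ← hwy']
      have hc := hz0comm w hwP
      have e1 : g * w * g⁻¹ * (g⁻¹⁻¹ * z0 * g⁻¹) = g * (w * z0) * g⁻¹ := by group
      have e2 : g⁻¹⁻¹ * z0 * g⁻¹ * (g * w * g⁻¹) = g * (z0 * w) * g⁻¹ := by group
      rw [e1, e2, hc]
    refine hr3.trans ?_
    by_cases hyz : z1 = y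
    · subst hyz; exact Reachable.refl _
    · refine SimpleGraph.Adj.reachable ?_
      refine ⟨fun e => hyz (congrArg Subtype.val e), ?_⟩
      show z1 * y = y * z1
      exact hz1comm.symm
  haveI : Nonempty ({x : G | orderOf x = p} : Set G) := ⟨⟨x, hxX⟩⟩
  exact ⟨fun a b => (main a.1 a.2).symm.trans (main b.1 b.2)⟩
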